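/- arXiv:2506.03612 — 7 statements merged into one kernel-verified Lean document; each statement's English description precedes it below -/
import Mathlib

section
/- Let G be a connected undirected graph, s,t nonadjacent vertices, and S, T minimal s,t-separators of G. Then C_s(G−S) ⊆ C_s(G−T) if and only if S ⊆ T ∪ C_s(G−T), which holds if and only if T ⊆ S ∪ C_t(G−S). -/
variable {V : Type*}

/-- Reachability in `G` by a walk avoiding the vertex set `S`. -/
def ReachAvoid (G : SimpleGraph V) (S : Set V) (u v : V) : Prop :=
  ∃ w : G.Walk u v, ∀ x ∈ w.support, x ∉ S

/-- The connected component of `G − S` containing `s`, as a subset of `V`. -/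
def compOf (G : SimpleGraph V) (S : Set V) (s : V) : Set V :=
  {v | ReachAvoid G S s v}

/-- `S` is an `s,t`-separator of `G`. -/
def IsSep (G : SimpleGraph V) (s t : V) (S : Set V) : Prop :=
  s ∉ S ∧ t ∉ S ∧ ¬ ReachAvoid G S s t

/-- `S` is a minimal `s,t`-separator of `G`. -/
def IsMinSep (G : SimpleGraph V) (s t : V) (S : Set V) : Prop :=
  IsSep G s t S ∧ ∀ S' ⊂ S, ¬ IsSep G s t S'

/-- The open neighborhood of a vertex set `X`. -/
def nbhd (G : SimpleGraph V) (X : Set V) : Set V :=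
  {v | v ∉ X ∧ ∃ x ∈ X, G.Adj x v}

/-- The closed neighborhood of a vertex `v`. -/
def clNbhd (G : SimpleGraph V) (v : V) : Set V :=
  insert v (G.neighborSet v)

/-- `S` is a minimal `s,t`-separator close to `sA`. -/
def CloseTo (G : SimpleGraph V) (s t : V) (A : Set V) (S : Set V) : Prop :=
  IsMinSep G s t S ∧ A ⊆ compOf G S s ∧
    ∀ T, IsMinSep G s t T → T ≠ S → A ⊆ compOf G T s →
      ¬ compOf G T s ⊆ compOf G S s

/-- `G` contains no asteroidal triple. -/
def IsATFree (G : SimpleGraph V) : Prop :=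
  ¬ ∃ a b c : V, a ≠ b ∧ a ≠ c ∧ b ≠ c ∧
    ¬ G.Adj a b ∧ ¬ G.Adj a c ∧ ¬ G.Adj b c ∧
    (∃ w : G.Walk a b, ∀ x ∈ w.support, x ∉ clNbhd G c) ∧
    (∃ w : G.Walk a c, ∀ x ∈ w.support, x ∉ clNbhd G b) ∧
    (∃ w : G.Walk b c, ∀ x ∈ w.support, x ∉ clNbhd G a)

/-- `S` is an `A,B`-separator. -/
def IsABSep (G : SimpleGraph V) (A B : Set V) (S : Set V) : Prop :=
  S ⊆ (A ∪ B)ᶜ ∧ ∀ a ∈ A, ∀ b ∈ B, ¬ ReachAvoid G S a b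

/-- `S` is a minimal `A,B`-separator. -/
def IsMinABSep (G : SimpleGraph V) (A B S : Set V) : Prop :=
  IsABSep G A B S ∧ ∀ S' ⊂ S, ¬ IsABSep G A B S'

/-- `S` is a safe (connectivity-preserving) `A,B`-separator: removing `S`
leaves two distinct components, one containing `A` and one containing `B`. -/
def IsSafeSep (G : SimpleGraph V) (A B S : Set V) : Prop :=
  S ⊆ (A ∪ B)ᶜ ∧ ∃ a b : V, a ∉ S ∧ b ∉ S ∧
    A ⊆ compOf G S a ∧ B ⊆ compOf G S b ∧
    Disjoint (compOf G S a) (compOf G S b)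

/-- The induced subgraph on `X` is connected (any two vertices of `X` are joined
by a walk staying in `X`). -/
def ConnIn (G : SimpleGraph V) (X : Set V) : Prop :=
  ∀ x ∈ X, ∀ y ∈ X, ∃ w : G.Walk x y, ∀ z ∈ w.support, z ∈ X

/-- The graph obtained from `G` by contracting `{s} ∪ A` to the vertex `s`
(the vertices of `A` become isolated). -/
def contractGraph (G : SimpleGraph V) (s : V) (A : Set V) : SimpleGraph V where
  Adj u v := u ∉ A ∧ v ∉ A ∧ u ≠ v ∧
    (G.Adj u v ∨ (u = s ∧ ∃ a ∈ A, G.Adj a v) ∨ (v = s ∧ ∃ a ∈ A, G.Adj a u))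
  symm := by
    constructor
    rintro u v ⟨hu, hv, hne, h⟩
    refine ⟨hv, hu, hne.symm, ?_⟩
    rcases h with h | h | h
    · exact Or.inl h.symm
    · exact Or.inr (Or.inr h)
    · exact Or.inr (Or.inl h)
  loopless := by
    constructor
    rintro u ⟨_, _, hne, _⟩
    exact hne rfl

/-- The graph obtained from `G` by adding all edges from `s` to `N_G[A]`. -/
def addApex (G : SimpleGraph V) (s : V) (A : Set V) : SimpleGraph V where
  Adj u v := G.Adj u v ∨
    (u = s ∧ v ≠ s ∧ v ∈ A ∪ nbhd G A) ∨
    (v = s ∧ u ≠ s ∧ u ∈ A ∪ nbhd G A)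
  symm := by
    constructor
    rintro u v (h | h | h)
    · exact Or.inl h.symm
    · exact Or.inr (Or.inr h)
    · exact Or.inr (Or.inl h)
  loopless := by
    constructor
    rintro u (h | ⟨h1, h2, _⟩ | ⟨h1, h2, _⟩)
    · exact G.loopless.irrefl u h
    · exact h2 h1
    · exact h2 h1

/-- The graph obtained from `G` by subdividing every edge. -/
def subdiv (G : SimpleGraph V) : SimpleGraph (V ⊕ G.edgeSet) where
  Adj x y :=
    match x, y with
    | Sum.inl u, Sum.inr e => u ∈ (e : Sym2 V)
    | Sum.inr e, Sum.inl u => u ∈ (e : Sym2 V)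
    | _, _ => False
  symm := by
    constructor
    rintro (u | e) (v | f) h <;> exact h
  loopless := by
    constructor
    rintro (u | e) h <;> exact h

/-- The instance `2Dis(G,A,B)` of 2-Disjoint-Connected-Subgraphs has a solution. -/
def TwoDisSolvable (G : SimpleGraph V) (A B : Set V) : Prop :=
  ∃ A₁ B₁ : Set V, Disjoint A₁ B₁ ∧ A ⊆ A₁ ∧ B ⊆ B₁ ∧
    ConnIn G A₁ ∧ ConnIn G B₁

section Aux

variable {G : SimpleGraph V} {S T : Set V} {s t u v x y z : V}

lemma reach_refl (hs : s ∉ S) : ReachAvoid G S s s :=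
  ⟨SimpleGraph.Walk.nil, by simpa using hs⟩

lemma reach_symm (h : ReachAvoid G S u v) : ReachAvoid G S v u := by
  obtain ⟨w, hw⟩ := h
  exact ⟨w.reverse, by simpa using hw⟩

lemma reach_trans (h1 : ReachAvoid G S u v) (h2 : ReachAvoid G S v x) :
    ReachAvoid G S u x := by
  obtain ⟨w1, hw1⟩ := h1; obtain ⟨w2, hw2⟩ := h2
  refine ⟨w1.append w2, fun z hz => ?_⟩
  rcases (SimpleGraph.Walk.mem_support_append_iff _ _).1 hz with h | h
  exacts [hw1 z h, hw2 z h]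

lemma compOf_not_mem (h : v ∈ compOf G S s) : v ∉ S := by
  obtain ⟨w, hw⟩ := h
  exact hw v w.end_mem_support

lemma compOf_self (hs : s ∉ S) : s ∈ compOf G S s := reach_refl hs

lemma adj_ext (h : v ∈ compOf G S s) (hadj : G.Adj v y) (hy : y ∉ S) :
    y ∈ compOf G S s := by
  refine reach_trans h ⟨SimpleGraph.Walk.cons hadj SimpleGraph.Walk.nil, ?_⟩
  intro z hz
  simp only [SimpleGraph.Walk.support_cons, SimpleGraph.Walk.support_nil,
    List.mem_cons, List.mem_singleton] at hz
  rcases hz with rfl | rfl | h'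
  · exact compOf_not_mem h
  · exact hy
  · exact absurd h' (by simp)

lemma mem_of_support {w : G.Walk s v} (hw : ∀ x ∈ w.support, x ∉ S)
    (hz : z ∈ w.support) : z ∈ compOf G S s := by
  classical
  exact ⟨w.takeUntil z hz, fun x hx =>
    hw x (SimpleGraph.Walk.support_takeUntil_subset _ _ hx)⟩

lemma not_both (hr : ¬ ReachAvoid G S s t) (h1 : v ∈ compOf G S s)
    (h2 : v ∈ compOf G S t) : False :=
  hr (reach_trans h1 (reach_symm h2))

lemma walk_lemma {u t : V} (w : G.Walk u t) (hu : u ∈ compOf G S s)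
    (hw : ∀ z ∈ w.support, z ∈ S → z = x) :
    t ∈ compOf G S s ∨ ∃ y, y ∈ compOf G S s ∧ G.Adj y x := by
  induction w with
  | nil => exact Or.inl hu
  | @cons a b c hab p ih =>
    have hb : ∀ z ∈ p.support, z ∈ S → z = x := fun z hz =>
      hw z (by simp [hz])
    by_cases hbS : b ∈ S
    · have hbx : b = x := hw b (by simp) hbS
      exact Or.inr ⟨a, hu, hbx ▸ hab⟩
    · exact ih (adj_ext hu hab hbS) hb

lemma minsep_symm (h : IsMinSep G s t S) : IsMinSep G t s S := by
  obtain ⟨⟨hs, ht, hr⟩, hmin⟩ := h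
  refine ⟨⟨ht, hs, fun h' => hr (reach_symm h')⟩, fun S' hS' hsep => ?_⟩
  exact hmin S' hS' ⟨hsep.2.1, hsep.1, fun h' => hsep.2.2 (reach_symm h')⟩

lemma sep_neighbor (hS : IsMinSep G s t S) (hx : x ∈ S) :
    ∃ y, y ∈ compOf G S s ∧ G.Adj y x := by
  obtain ⟨⟨hs, ht, hr⟩, hmin⟩ := hS
  have hss : S \ {x} ⊂ S := by
    refine ⟨Set.diff_subset, fun hsub => ?_⟩
    exact (hsub hx).2 rfl
  have hnsep := hmin _ hss
  have hsx : s ∉ S \ {x} := fun h => hs h.1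
  have htx : t ∉ S \ {x} := fun h => ht h.1
  have hreach : ReachAvoid G (S \ {x}) s t := by
    by_contra hc
    exact hnsep ⟨hsx, htx, hc⟩
  obtain ⟨w, hw⟩ := hreach
  have hw' : ∀ z ∈ w.support, z ∈ S → z = x := by
    intro z hz hzS
    by_contra hne
    exact hw z hz ⟨hzS, hne⟩
  rcases walk_lemma w (reach_refl hs) hw' with h | h
  · exact absurd h hr
  · exact h

lemma comp_mono (hdis : ∀ z ∈ compOf G T t, z ∉ S) :
    compOf G T t ⊆ compOf G S t := by
  rintro v ⟨w, hw⟩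
  exact ⟨w, fun z hz => hdis z (mem_of_support hw hz)⟩

lemma comp_t_disj (hT : IsMinSep G s t T) (h : S ⊆ T ∪ compOf G T s) :
    ∀ z ∈ compOf G T t, z ∉ S := by
  intro z hz hzS
  rcases h hzS with h' | h'
  · exact compOf_not_mem hz h'
  · exact not_both hT.1.2.2 h' hz

lemma main_dir (hS : IsMinSep G s t S) (hT : IsMinSep G s t T)
    (h : S ⊆ T ∪ compOf G T s) : T ⊆ S ∪ compOf G S t := by
  have hdis := comp_t_disj (S := S) hT h
  have hsub : compOf G T t ⊆ compOf G S t := comp_mono hdis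
  intro z hzT
  by_cases hzS : z ∈ S
  · exact Or.inl hzS
  · obtain ⟨y, hy, hadj⟩ := sep_neighbor (minsep_symm hT) hzT
    exact Or.inr (adj_ext (hsub hy) hadj hzS)

end Aux

theorem stmt0 (G : SimpleGraph V) (hconn : G.Connected) (s t : V)
    (hst : s ≠ t) (hadj : ¬ G.Adj s t) (S T : Set V)
    (hS : IsMinSep G s t S) (hT : IsMinSep G s t T) :
    (compOf G S s ⊆ compOf G T s ↔ S ⊆ T ∪ compOf G T s) ∧
    (S ⊆ T ∪ compOf G T s ↔ T ⊆ S ∪ compOf G S t) := by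
  constructor
  · constructor
    · intro h x hx
      by_cases hxT : x ∈ T
      · exact Or.inl hxT
      · obtain ⟨y, hy, hady⟩ := sep_neighbor hS hx
        exact Or.inr (adj_ext (h hy) hady hxT)
    · intro h v hv
      have hdis := comp_t_disj (S := S) hT h
      have hsub : compOf G T t ⊆ compOf G S t := comp_mono hdis
      have hCsT : ∀ z ∈ compOf G S s, z ∉ T := by
        intro z hz hzT
        obtain ⟨y, hy, hady⟩ := sep_neighbor (minsep_symm hT) hzT
        have hyS : y ∉ S := hdis y hy
        have hys : y ∈ compOf G S s := adj_ext hz hady.symm hyS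
        exact not_both hS.1.2.2 hys (hsub hy)
      obtain ⟨w, hw⟩ := hv
      exact ⟨w, fun z hz => hCsT z (mem_of_support hw hz)⟩
  · constructor
    · exact main_dir hS hT
    · exact main_dir (minsep_symm hT) (minsep_symm hS)
end

section
/- Let G be a connected graph, s,t vertices, A ⊆ V(G)∖{s,t} such that G[{s}∪A] is connected, and let H be the graph obtained from G by contracting all of {s}∪A to the single vertex s. Then the minimal s,t-separators of H are exactly the minimal s,t-separators S of G for which A ⊆ C_s(G−S). -/
variable {V : Type*}

open SimpleGraph in
lemma walkA {G : SimpleGraph V} {s : V} {A : Set V} (hs : s ∉ A) :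
    ∀ {u v : V} (w : G.Walk u v), v ∉ A →
      ((u ∉ A → ∃ w' : (contractGraph G s A).Walk u v,
          ∀ x ∈ w'.support, x = s ∨ x ∈ w.support) ∧
       (u ∈ A → ∃ w' : (contractGraph G s A).Walk s v,
          ∀ x ∈ w'.support, x = s ∨ x ∈ w.support)) := by
  intro u v w hv
  induction w with
  | nil =>
    exact ⟨fun _ => ⟨Walk.nil, by simp⟩, fun hu => absurd hu hv⟩
  | @cons u x v h p ih =>
    obtain ⟨ih1, ih2⟩ := ih hv
    have lift : ∀ y, (y = s ∨ y ∈ p.support) → (y = s ∨ y ∈ (Walk.cons h p).support) := by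
      intro y hy
      rcases hy with rfl | hy
      · exact Or.inl rfl
      · exact Or.inr (by rw [Walk.support_cons]; exact List.mem_cons_of_mem _ hy)
    constructor
    · intro hu
      by_cases hx : x ∈ A
      · obtain ⟨q, hq⟩ := ih2 hx
        by_cases hus : u = s
        · subst hus
          exact ⟨q, fun y hy => lift y (hq y hy)⟩
        · refine ⟨Walk.cons ⟨hu, hs, hus, Or.inr (Or.inr ⟨rfl, x, hx, h.symm⟩)⟩ q, ?_⟩
          intro y hy
          change y ∈ _ :: q.support at hy; rw [List.mem_cons] at hy
          rcases hy with rfl | hy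
          · exact Or.inr (by rw [Walk.support_cons]; exact List.mem_cons_self)
          · exact lift y (hq y hy)
      · obtain ⟨q, hq⟩ := ih1 hx
        refine ⟨Walk.cons ⟨hu, hx, h.ne, Or.inl h⟩ q, ?_⟩
        intro y hy
        change y ∈ _ :: q.support at hy; rw [List.mem_cons] at hy
        rcases hy with rfl | hy
        · exact Or.inr (by rw [Walk.support_cons]; exact List.mem_cons_self)
        · exact lift y (hq y hy)
    · intro hu
      by_cases hx : x ∈ A
      · obtain ⟨q, hq⟩ := ih2 hx
        exact ⟨q, fun y hy => lift y (hq y hy)⟩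
      · obtain ⟨q, hq⟩ := ih1 hx
        by_cases hxs : x = s
        · subst hxs
          exact ⟨q, fun y hy => lift y (hq y hy)⟩
        · refine ⟨Walk.cons ⟨hs, hx, Ne.symm hxs, Or.inr (Or.inl ⟨rfl, u, hu, h⟩)⟩ q, ?_⟩
          intro y hy
          change y ∈ _ :: q.support at hy; rw [List.mem_cons] at hy
          rcases hy with rfl | hy
          · exact Or.inl rfl
          · exact lift y (hq y hy)

open SimpleGraph in
lemma walkB {G : SimpleGraph V} {s : V} {A : Set V}
    (hconnA : ConnIn G (insert s A)) :
    ∀ {u v : V} (w : (contractGraph G s A).Walk u v),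
      ∃ w' : G.Walk u v, ∀ x ∈ w'.support,
        x ∈ w.support ∨ x ∈ insert s A := by
  intro u v w
  induction w with
  | nil => exact ⟨Walk.nil, by simp⟩
  | @cons u x v h p ih =>
    obtain ⟨q, hq⟩ := ih
    have lift : ∀ y, (y ∈ p.support ∨ y ∈ insert s A) →
        (y ∈ (Walk.cons h p).support ∨ y ∈ insert s A) := by
      intro y hy
      rcases hy with hy | hy
      · exact Or.inl (by rw [Walk.support_cons]; exact List.mem_cons_of_mem _ hy)
      · exact Or.inr hy
    obtain ⟨hu, hx, hne, hc⟩ := h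
    rcases hc with hg | ⟨hus, a, ha, hax⟩ | ⟨hxs, a, ha, hau⟩
    · refine ⟨Walk.cons hg q, ?_⟩
      intro y hy
      rw [Walk.support_cons, List.mem_cons] at hy
      rcases hy with rfl | hy
      · exact Or.inl (by simp)
      · exact lift y (hq y hy)
    · obtain ⟨r, hr⟩ := hconnA s (Set.mem_insert _ _) a (Set.mem_insert_of_mem _ ha)
      subst hus
      refine ⟨r.append (Walk.cons hax q), ?_⟩
      intro y hy
      rw [Walk.mem_support_append_iff] at hy
      rcases hy with hy | hy
      · exact Or.inr (hr y hy)
      · rw [Walk.support_cons, List.mem_cons] at hy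
        rcases hy with rfl | hy
        · exact Or.inr (Set.mem_insert_of_mem _ ha)
        · exact lift y (hq y hy)
    · obtain ⟨r, hr⟩ := hconnA a (Set.mem_insert_of_mem _ ha) s (Set.mem_insert _ _)
      subst hxs
      refine ⟨Walk.cons hau.symm (r.append q), ?_⟩
      intro y hy
      rw [Walk.support_cons, List.mem_cons] at hy
      rcases hy with rfl | hy
      · exact Or.inl (by simp)
      · rw [Walk.mem_support_append_iff] at hy
        rcases hy with hy | hy
        · exact Or.inr (hr y hy)
        · exact lift y (hq y hy)

open SimpleGraph in
lemma memA_support {G : SimpleGraph V} {s : V} {A : Set V} :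
    ∀ {u v : V} (w : (contractGraph G s A).Walk u v) {a : V},
      a ∈ A → a ∈ w.support → a = v := by
  intro u v w
  induction w with
  | nil => intro a _ hsup; simpa using hsup
  | @cons u x v h p ih =>
    intro a ha hsup
    rw [Walk.support_cons, List.mem_cons] at hsup
    rcases hsup with rfl | hsup
    · exact absurd ha h.1
    · exact ih ha hsup

lemma reach_of_reach_contract {G : SimpleGraph V} {s : V} {A S : Set V}
    (hconnA : ConnIn G (insert s A)) (hSA : ∀ a ∈ A, a ∉ S) (hsS : s ∉ S)
    {u v : V} (h : ReachAvoid (contractGraph G s A) S u v) : ReachAvoid G S u v := by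
  obtain ⟨w, hw⟩ := h
  obtain ⟨w', hw'⟩ := walkB hconnA w
  refine ⟨w', fun x hx => ?_⟩
  rcases hw' x hx with hx' | hx'
  · exact hw x hx'
  · rcases hx' with rfl | hx'
    · exact hsS
    · exact hSA x hx'

lemma reach_contract_of_reach {G : SimpleGraph V} {s : V} {A S : Set V}
    (hs : s ∉ A) (hsS : s ∉ S)
    {u v : V} (hu : u ∉ A) (hv : v ∉ A)
    (h : ReachAvoid G S u v) : ReachAvoid (contractGraph G s A) S u v := by
  obtain ⟨w, hw⟩ := h
  obtain ⟨w', hw'⟩ := (walkA hs w hv).1 hu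
  refine ⟨w', fun x hx => ?_⟩
  rcases hw' x hx with rfl | hx'
  · exact hsS
  · exact hw x hx'

lemma sep_contract_iff {G : SimpleGraph V} {s t : V} {A S : Set V}
    (hs : s ∉ A) (ht : t ∉ A) (hconnA : ConnIn G (insert s A))
    (hSA : ∀ a ∈ A, a ∉ S) :
    IsSep (contractGraph G s A) s t S ↔ IsSep G s t S := by
  constructor
  · rintro ⟨hsS, htS, hr⟩
    exact ⟨hsS, htS, fun hr' => hr (reach_contract_of_reach hs hsS hs ht hr')⟩
  · rintro ⟨hsS, htS, hr⟩
    exact ⟨hsS, htS, fun hr' => hr (reach_of_reach_contract hconnA hSA hsS hr')⟩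

theorem stmt1 (G : SimpleGraph V) (hconn : G.Connected) (s t : V)
    (A : Set V) (hsA : s ∉ A) (htA : t ∉ A)
    (hconnA : ConnIn G (insert s A)) :
    {S : Set V | IsMinSep (contractGraph G s A) s t S} =
      {S : Set V | IsMinSep G s t S ∧ A ⊆ compOf G S s} := by
  ext S
  simp only [Set.mem_setOf_eq]
  constructor
  · rintro ⟨⟨hsS, htS, hr⟩, hmin⟩
    -- minimal separators of the contraction avoid A
    have hSA : ∀ a ∈ A, a ∉ S := by
      intro a ha haS
      refine hmin (S \ {a}) ⟨Set.diff_subset, fun hsub => ?_⟩ ?_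
      · exact (hsub haS).2 rfl
      · refine ⟨fun h => hsS h.1, fun h => htS h.1, ?_⟩
        rintro ⟨w, hw⟩
        apply hr
        refine ⟨w, fun x hx => ?_⟩
        intro hxS
        by_cases hxa : x = a
        · subst hxa
          exact htA (memA_support w ha hx ▸ ha)
        · exact hw x hx ⟨hxS, hxa⟩
    have hSsep : IsSep G s t S :=
      (sep_contract_iff hsA htA hconnA hSA).mp ⟨hsS, htS, hr⟩
    refine ⟨⟨hSsep, fun S' hS' hS'sep => ?_⟩, fun a ha => ?_⟩
    · have hS'A : ∀ a ∈ A, a ∉ S' := fun a ha haS' => hSA a ha (hS'.1 haS')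
      exact hmin S' hS' ((sep_contract_iff hsA htA hconnA hS'A).mpr hS'sep)
    · obtain ⟨w, hw⟩ := hconnA s (Set.mem_insert _ _) a (Set.mem_insert_of_mem _ ha)
      refine ⟨w, fun x hx => ?_⟩
      rcases hw x hx with rfl | hx'
      · exact hsS
      · exact hSA x hx'
  · rintro ⟨⟨hSsep, hmin⟩, hAcomp⟩
    obtain ⟨hsS, htS, hr⟩ := hSsep
    have hSA : ∀ a ∈ A, a ∉ S := by
      intro a ha haS
      obtain ⟨w, hw⟩ := hAcomp ha
      exact hw a (SimpleGraph.Walk.end_mem_support w) haS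
    refine ⟨(sep_contract_iff hsA htA hconnA hSA).mpr ⟨hsS, htS, hr⟩,
      fun S' hS' hS'sep => ?_⟩
    have hS'A : ∀ a ∈ A, a ∉ S' := fun a ha haS' => hSA a ha (hS'.1 haS')
    exact hmin S' hS' ((sep_contract_iff hsA htA hconnA hS'A).mp hS'sep)
end

section
/- Let G be a connected graph, s,t vertices, A ⊆ V(G)∖{s,t} with G[{s}∪A] connected, and let H be obtained from G by contracting {s}∪A to s. Then for every minimal s,t-separator S of H, the s-side component satisfies C_s(G−S) = C_s(H−S) ∪ A and the t-side component satisfies C_t(G−S) = C_t(H−S). -/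
variable {V : Type*}

section Aux

variable {G : SimpleGraph V} {S : Set V}

lemma reachAvoid_refl {u : V} (h : u ∉ S) : ReachAvoid G S u u :=
  ⟨.nil, by simp [h]⟩

lemma reachAvoid_symm {u v : V} (h : ReachAvoid G S u v) : ReachAvoid G S v u := by
  obtain ⟨w, hw⟩ := h
  exact ⟨w.reverse, fun x hx => hw x (by
    rw [SimpleGraph.Walk.support_reverse] at hx; exact List.mem_reverse.mp hx)⟩

lemma reachAvoid_trans {u v x : V} (h1 : ReachAvoid G S u v) (h2 : ReachAvoid G S v x) :
    ReachAvoid G S u x := by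
  obtain ⟨w1, hw1⟩ := h1; obtain ⟨w2, hw2⟩ := h2
  refine ⟨w1.append w2, fun y hy => ?_⟩
  rcases (SimpleGraph.Walk.mem_support_append_iff w1 w2).mp hy with h | h
  · exact hw1 y h
  · exact hw2 y h

lemma reachAvoid_adj {u v : V} (h : G.Adj u v) (hu : u ∉ S) (hv : v ∉ S) :
    ReachAvoid G S u v :=
  ⟨h.toWalk, by
    intro x hx
    simp only [SimpleGraph.Adj.toWalk, SimpleGraph.Walk.support_cons,
      SimpleGraph.Walk.support_nil, List.mem_cons, List.mem_singleton] at hx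
    rcases hx with rfl | hx | hx
    · exact hu
    · exact hx ▸ hv
    · simp at hx⟩

/-- In the contracted graph, no walk starting outside `A` meets `A`. -/
lemma contract_support_not_mem (s : V) (A : Set V) :
    ∀ {u v : V} (p : (contractGraph G s A).Walk u v), u ∉ A →
      ∀ x ∈ p.support, x ∉ A := by
  intro u v p
  induction p with
  | nil =>
    intro hu x hx
    simp only [SimpleGraph.Walk.support_nil, List.mem_singleton] at hx
    exact hx ▸ hu
  | @cons u w v h p ih =>
    intro hu x hx
    simp only [SimpleGraph.Walk.support_cons, List.mem_cons] at hx
    rcases hx with rfl | hx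
    · exact hu
    · exact ih h.2.1 x hx

/-- Lift a walk in the contracted graph to reachability in `G`. -/
lemma contract_lift {s : V} {A : Set V}
    (hwithin : ∀ x ∈ insert s A, ∀ y ∈ insert s A, ReachAvoid G S x y)
    (hAS : ∀ a ∈ A, a ∉ S) (hsS : s ∉ S) :
    ∀ {u v : V} (p : (contractGraph G s A).Walk u v),
      (∀ x ∈ p.support, x ∉ S) → ReachAvoid G S u v := by
  intro u v p
  induction p with
  | nil =>
    intro hp
    exact reachAvoid_refl (hp _ (by simp))
  | @cons u w v h p ih =>
    intro hp
    have huS : u ∉ S := hp u (by simp)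
    have hwS : w ∉ S := hp w (by simp)
    have htail : ∀ x ∈ p.support, x ∉ S := fun x hx => hp x (by simp [hx])
    have hrest : ReachAvoid G S w v := ih htail
    obtain ⟨huA, hwA, hne, hcase⟩ := h
    rcases hcase with hadj | ⟨rfl, a, haA, ha⟩ | ⟨rfl, a, haA, ha⟩
    · exact reachAvoid_trans (reachAvoid_adj hadj huS hwS) hrest
    · -- u = s, a ∈ A, G.Adj a w
      have h1 : ReachAvoid G S u a := hwithin u (by simp) a (Or.inr haA)
      have h2 : ReachAvoid G S a w := reachAvoid_adj ha (hAS a haA) hwS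
      exact reachAvoid_trans (reachAvoid_trans h1 h2) hrest
    · -- w = s, a ∈ A, G.Adj a u
      have h1 : ReachAvoid G S u a := reachAvoid_adj ha.symm huS (hAS a haA)
      have h2 : ReachAvoid G S a w := hwithin a (Or.inr haA) w (by simp)
      exact reachAvoid_trans (reachAvoid_trans h1 h2) hrest

/-- Project a walk in `G` avoiding `S` to reachability in the contracted graph. -/
lemma contract_proj {s : V} {A : Set V} (hsA : s ∉ A) (hsS : s ∉ S) :
    ∀ {u v : V} (p : G.Walk u v), (∀ x ∈ p.support, x ∉ S) → v ∉ A →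
      (u ∈ insert s A → ReachAvoid (contractGraph G s A) S s v) ∧
      (u ∉ insert s A → ReachAvoid (contractGraph G s A) S u v) := by
  intro u v p
  induction p with
  | nil =>
    intro hp hvA
    refine ⟨fun hu => ?_, fun hu => reachAvoid_refl (hp _ (by simp))⟩
    rcases hu with rfl | hu
    · exact reachAvoid_refl hsS
    · exact absurd hu hvA
  | @cons u w v h p ih =>
    intro hp hvA
    have huS : u ∉ S := hp u (by simp)
    have hwS : w ∉ S := hp w (by simp)
    have htail : ∀ x ∈ p.support, x ∉ S := fun x hx => hp x (by simp [hx])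
    have IH := ih htail hvA
    by_cases hw : w ∈ insert s A
    · have hsv : ReachAvoid (contractGraph G s A) S s v := IH.1 hw
      refine ⟨fun _ => hsv, fun hu => ?_⟩
      have huA : u ∉ A := fun h' => hu (Or.inr h')
      have hus : u ≠ s := fun h' => hu (Or.inl h')
      have hadj : (contractGraph G s A).Adj u s := by
        rcases hw with rfl | hwA
        · exact ⟨huA, hsA, hus, Or.inl h⟩
        · exact ⟨huA, hsA, hus, Or.inr (Or.inr ⟨rfl, w, hwA, h.symm⟩)⟩
      exact reachAvoid_trans (reachAvoid_adj hadj huS hsS) hsv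
    · have hwA : w ∉ A := fun h' => hw (Or.inr h')
      have hws : w ≠ s := fun h' => hw (Or.inl h')
      have hwv : ReachAvoid (contractGraph G s A) S w v := IH.2 hw
      refine ⟨fun hu => ?_, fun hu => ?_⟩
      · have hadj : (contractGraph G s A).Adj s w := by
          rcases hu with rfl | huA
          · exact ⟨hsA, hwA, fun h' => hws h'.symm, Or.inl h⟩
          · exact ⟨hsA, hwA, fun h' => hws h'.symm, Or.inr (Or.inl ⟨rfl, u, huA, h⟩)⟩
        exact reachAvoid_trans (reachAvoid_adj hadj hsS hwS) hwv
      · have huA : u ∉ A := fun h' => hu (Or.inr h')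
        have hadj : (contractGraph G s A).Adj u w := ⟨huA, hwA, h.ne, Or.inl h⟩
        exact reachAvoid_trans (reachAvoid_adj hadj huS hwS) hwv

end Aux

theorem stmt2 (G : SimpleGraph V) (hconn : G.Connected) (s t : V)
    (A : Set V) (hsA : s ∉ A) (htA : t ∉ A)
    (hconnA : ConnIn G (insert s A))
    (S : Set V) (hS : IsMinSep (contractGraph G s A) s t S) :
    compOf G S s = compOf (contractGraph G s A) S s ∪ A ∧
    compOf G S t = compOf (contractGraph G s A) S t := by
  obtain ⟨⟨hsS, htS, hsep⟩, hmin⟩ := hS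
  -- S is disjoint from A
  have hAS : ∀ a ∈ A, a ∉ S := by
    intro a haA haS
    refine hmin (S \ {a}) ?_ ⟨fun h => hsS h.1, fun h => htS h.1, ?_⟩
    · exact ⟨Set.diff_subset, fun hsub => (hsub haS).2 rfl⟩
    · rintro ⟨p, hp⟩
      have hnoA := contract_support_not_mem s A p hsA
      refine hsep ⟨p, fun x hx hxS => ?_⟩
      by_cases hxa : x = a
      · exact hnoA x hx (hxa ▸ haA)
      · exact hp x hx ⟨hxS, hxa⟩
  have hinsS : ∀ x ∈ insert s A, x ∉ S := by
    rintro x (rfl | hx)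
    · exact hsS
    · exact hAS x hx
  have hwithin : ∀ x ∈ insert s A, ∀ y ∈ insert s A, ReachAvoid G S x y := by
    intro x hx y hy
    obtain ⟨w, hw⟩ := hconnA x hx y hy
    exact ⟨w, fun z hz => hinsS z (hw z hz)⟩
  -- S separates s from t in G as well
  have hGsep : ¬ ReachAvoid G S s t := by
    rintro ⟨p, hp⟩
    exact hsep ((contract_proj hsA hsS p hp htA).1 (Or.inl rfl))
  have hst : s ≠ t := by rintro rfl; exact hsep (reachAvoid_refl hsS)
  have htins : t ∉ insert s A := by
    rintro (rfl | h)
    · exact hst rfl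
    · exact htA h
  constructor
  · ext v
    simp only [compOf, Set.mem_setOf_eq, Set.mem_union]
    constructor
    · rintro ⟨p, hp⟩
      by_cases hvA : v ∈ A
      · exact Or.inr hvA
      · exact Or.inl ((contract_proj hsA hsS p hp hvA).1 (Or.inl rfl))
    · rintro (⟨p, hp⟩ | h)
      · exact contract_lift hwithin hAS hsS p hp
      · exact hwithin s (Or.inl rfl) v (Or.inr h)
  · ext v
    simp only [compOf, Set.mem_setOf_eq]
    constructor
    · rintro ⟨p, hp⟩
      by_cases hvA : v ∈ A
      · exact absurd (reachAvoid_trans (hwithin s (Or.inl rfl) v (Or.inr hvA))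
          (reachAvoid_symm ⟨p, hp⟩)) hGsep
      · exact (contract_proj hsA hsS p hp hvA).2 htins
    · rintro ⟨p, hp⟩
      exact contract_lift hwithin hAS hsS p hp
end

section
/- Let G be a connected graph, s,t nonadjacent vertices, and A ⊆ V(G)∖{s,t} with G[{s}∪A] connected and ({s}∪A) ∩ N_G[t] = ∅. Then there exists exactly one minimal s,t-separator S of G that is close to sA, i.e., A ⊆ C_s(G−S) and for every other minimal s,t-separator T with A ⊆ C_s(G−T) it holds that C_s(G−T) ⊄ C_s(G−S) (equivalently C_s(G−T) is not a subset of C_s(G−S)). -/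
variable {V : Type*}

open SimpleGraph in
private lemma reachAvoid_trans_s4 {G : SimpleGraph V} {S : Set V} {a b c : V}
    (h1 : ReachAvoid G S a b) (h2 : ReachAvoid G S b c) : ReachAvoid G S a c := by
  obtain ⟨w1, h1⟩ := h1; obtain ⟨w2, h2⟩ := h2
  exact ⟨w1.append w2, fun x hx =>
    ((Walk.mem_support_append_iff _ _).1 hx).elim (h1 x) (h2 x)⟩

open SimpleGraph in
private lemma not_mem_of_mem_compOf {G : SimpleGraph V} {S : Set V} {s v : V}
    (h : v ∈ compOf G S s) : v ∉ S := by
  obtain ⟨w, hw⟩ := h; exact hw v w.end_mem_support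

open SimpleGraph in
private lemma compOf_adj {G : SimpleGraph V} {S : Set V} {s u v : V}
    (hu : u ∈ compOf G S s) (h : G.Adj u v) (hv : v ∉ S) : v ∈ compOf G S s := by
  obtain ⟨w, hw⟩ := hu
  refine ⟨w.append (Walk.cons h Walk.nil), ?_⟩
  intro x hx
  rcases (Walk.mem_support_append_iff _ _).1 hx with hx | hx
  · exact hw x hx
  · simp only [Walk.support_cons, Walk.support_nil, List.mem_cons, List.mem_singleton,
      List.not_mem_nil, or_false] at hx
    rcases hx with rfl | rfl
    exacts [hw x w.end_mem_support, hv]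

open SimpleGraph in
private lemma support_mem_compOf {G : SimpleGraph V} {S : Set V} {s v : V}
    (w : G.Walk s v) (hw : ∀ x ∈ w.support, x ∉ S) :
    ∀ x ∈ w.support, x ∈ compOf G S s := by
  classical
  intro x hx
  exact ⟨w.takeUntil x hx, fun z hz => hw z (Walk.support_takeUntil_subset _ hx hz)⟩

open SimpleGraph in
private lemma stay_in {G : SimpleGraph V} (C : Set V) :
    ∀ {a b : V} (w : G.Walk a b), a ∈ C → (∀ x ∈ w.support, x ∉ nbhd G C) →
      ∀ x ∈ w.support, x ∈ C := by
  intro a b w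
  induction w with
  | nil =>
    intro ha _ x hx
    simp only [Walk.support_nil, List.mem_singleton] at hx
    subst hx; exact ha
  | @cons a c b h q ih =>
    intro ha hw x hx
    rw [Walk.support_cons] at hx
    have hw' : ∀ z ∈ q.support, z ∉ nbhd G C := by
      intro z hz
      apply hw
      rw [Walk.support_cons]
      exact List.mem_cons_of_mem _ hz
    rcases List.mem_cons.1 hx with rfl | hx
    · exact ha
    · have hc : c ∈ C := by
        by_contra hcC
        exact hw' c q.start_mem_support ⟨hcC, a, ha, h⟩
      exact ih hc hw' x hx

open SimpleGraph in
private lemma stay_out {G : SimpleGraph V} (X : Set V) :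
    ∀ {a b : V} (w : G.Walk a b), a ∉ X → (∀ x ∈ w.support, x ∉ nbhd G X) →
      ∀ x ∈ w.support, x ∉ X := by
  intro a b w
  induction w with
  | nil =>
    intro ha _ x hx
    simp only [Walk.support_nil, List.mem_singleton] at hx
    subst hx; exact ha
  | @cons a c b h q ih =>
    intro ha hw x hx
    rw [Walk.support_cons] at hx
    have hw' : ∀ z ∈ q.support, z ∉ nbhd G X := by
      intro z hz
      apply hw
      rw [Walk.support_cons]
      exact List.mem_cons_of_mem _ hz
    rcases List.mem_cons.1 hx with rfl | hx
    · exact ha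
    · have hc : c ∉ X := by
        intro hcX
        have hmem : a ∈ (Walk.cons h q).support := by
          rw [Walk.support_cons]; exact List.mem_cons_self
        exact hw a hmem ⟨ha, c, hcX, h.symm⟩
      exact ih hc hw' x hx

open SimpleGraph in
private lemma minsep_escape {G : SimpleGraph V} {s t : V} {T : Set V}
    (hT : IsMinSep G s t T) {u : V} (hu : u ∈ T) :
    ∃ w : G.Walk u t, (∀ x ∈ w.support, x ∈ T → x = u) ∧
      ∀ x ∈ w.support, x ≠ u → ReachAvoid G T x t := by
  classical
  obtain ⟨⟨hsT, htT, hsep⟩, hmin⟩ := hT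
  have hss : T \ {u} ⊂ T := Set.sdiff_singleton_ssubset.mpr hu
  have hns := hmin _ hss
  rw [IsSep] at hns
  push_neg at hns
  obtain ⟨w0, hw0⟩ := hns (fun h => hsT h.1) (fun h => htT h.1)
  have hw0' : ∀ x ∈ w0.support, x ∈ T → x = u := by
    intro x hx hxT
    by_contra hne
    exact hw0 x hx ⟨hxT, hne⟩
  have hu0 : u ∈ w0.reverse.support := by
    rw [Walk.support_reverse, List.mem_reverse]
    by_contra hu0
    exact hsep ⟨w0, fun x hx hxT => hu0 ((hw0' x hx hxT) ▸ hx)⟩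
  set p := w0.reverse.takeUntil u hu0 with hpdef
  have hpsub : ∀ x ∈ p.support, x ∈ w0.support := by
    intro x hx
    have := Walk.support_takeUntil_subset _ hu0 hx
    rwa [Walk.support_reverse, List.mem_reverse] at this
  have hp : ∀ x ∈ p.support, x ∈ T → x = u := fun x hx => hw0' x (hpsub x hx)
  have hcount : p.support.count u = 1 := Walk.count_support_takeUntil_eq_one _ hu0
  refine ⟨p.reverse, ?_, ?_⟩
  · intro x hx
    rw [Walk.support_reverse, List.mem_reverse] at hx
    exact hp x hx
  · intro x hx hxu
    rw [Walk.support_reverse, List.mem_reverse] at hx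
    set q := p.takeUntil x hx with hqdef
    set d := p.dropUntil x hx with hddef
    have hspec : q.append d = p := Walk.take_spec p hx
    have hud : u ∈ d.support.tail := by
      have : u ∈ d.support := d.end_mem_support
      rw [Walk.support_eq_cons d] at this
      rcases List.mem_cons.1 this with h | h
      · exact absurd h.symm hxu
      · exact h
    have hcnt : p.support.count u = q.support.count u + d.support.tail.count u := by
      rw [← hspec, Walk.support_append, List.count_append]
    have huq : u ∉ q.support := by
      intro huq
      have h1 : 0 < q.support.count u := List.count_pos_iff.mpr huq
      have h2 : 0 < d.support.tail.count u := List.count_pos_iff.mpr hud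
      omega
    refine ⟨q.reverse, ?_⟩
    intro z hz
    rw [Walk.support_reverse, List.mem_reverse] at hz
    intro hzT
    have := hp z (Walk.support_takeUntil_subset _ hx hz) hzT
    exact huq (this ▸ hz)


theorem stmt4 (G : SimpleGraph V) (hconn : G.Connected) (s t : V)
    (hst : s ≠ t) (hadj : ¬ G.Adj s t) (A : Set V)
    (hsA : s ∉ A) (htA : t ∉ A)
    (hconnA : ConnIn G (insert s A))
    (hAt : insert s A ∩ clNbhd G t = ∅) :
    ∃! S : Set V, CloseTo G s t A S := by
  classical
  set X : Set V := insert s A with hXdef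
  set N : Set V := nbhd G X with hNdef
  set D : Set V := compOf G N t with hDdef
  set S : Set V := nbhd G D with hSdef
  have hsX : s ∈ X := Set.mem_insert _ _
  have hXN : ∀ x ∈ X, x ∉ N := fun x hx h => h.1 hx
  have htX : t ∉ X := by
    intro h
    have : t ∈ X ∩ clNbhd G t := ⟨h, Set.mem_insert _ _⟩
    rw [hAt] at this; exact this
  have htN : t ∉ N := by
    rintro ⟨-, x, hxX, hadjxt⟩
    have : x ∈ X ∩ clNbhd G t := ⟨hxX, Set.mem_insert_of_mem _ hadjxt.symm⟩
    rw [hAt] at this; exact this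
  have htD : t ∈ D := ⟨SimpleGraph.Walk.nil, by
    intro x hx
    simp only [SimpleGraph.Walk.support_nil, List.mem_singleton] at hx
    subst hx; exact htN⟩
  have hsD : s ∉ D := by
    rintro ⟨r, hr⟩
    exact stay_out X r htX hr s r.end_mem_support hsX
  have hSN : S ⊆ N := by
    rintro v ⟨hvD, d, hdD, hdv⟩
    by_contra hvN
    exact hvD (compOf_adj hdD hdv hvN)
  have hXS : ∀ x ∈ X, x ∉ S := fun x hx h => hXN x hx (hSN h)
  -- S is a separator
  have hsepS : IsSep G s t S := by
    refine ⟨hXS s hsX, fun h => htN (hSN h), ?_⟩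
    rintro ⟨w, hw⟩
    have : ∀ x ∈ w.reverse.support, x ∉ S := by
      intro x hx
      rw [SimpleGraph.Walk.support_reverse, List.mem_reverse] at hx
      exact hw x hx
    exact hsD (stay_in D w.reverse htD this s w.reverse.end_mem_support)
  have hXcomp : ∀ x ∈ X, x ∈ compOf G S s := by
    intro x hx
    obtain ⟨w, hw⟩ := hconnA s hsX x hx
    exact ⟨w, fun z hz => hXS z (hw z hz)⟩
  -- S is minimal
  have hmin : IsMinSep G s t S := by
    refine ⟨hsepS, ?_⟩
    intro S' hss hsep'
    obtain ⟨v, hvS, hvS'⟩ := Set.exists_of_ssubset hss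
    obtain ⟨hvX, x, hxX, hxv⟩ := hSN hvS
    obtain ⟨hvD, d, hdD, hdv⟩ := hvS
    obtain ⟨rd, hrd⟩ := hdD
    obtain ⟨w1, hw1⟩ := hconnA s hsX x hxX
    have hsub' : S' ⊆ S := hss.subset
    refine hsep'.2.2 ⟨w1.append (SimpleGraph.Walk.cons hxv
      (SimpleGraph.Walk.cons hdv.symm rd.reverse)), ?_⟩
    intro z hz
    rcases (SimpleGraph.Walk.mem_support_append_iff _ _).1 hz with hz | hz
    · exact fun h => hXS z (hw1 z hz) (hsub' h)
    · rw [SimpleGraph.Walk.support_cons] at hz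
      rcases List.mem_cons.1 hz with rfl | hz
      · exact fun h => hXS z (hw1 z w1.end_mem_support) (hsub' h)
      · rw [SimpleGraph.Walk.support_cons] at hz
        rcases List.mem_cons.1 hz with rfl | hz
        · exact hvS'
        · rw [SimpleGraph.Walk.support_reverse, List.mem_reverse] at hz
          exact fun h => hrd z hz (hSN (hsub' h))
  -- key lemma: components of other minimal separators avoid compOf G S s
  have key : ∀ T, IsMinSep G s t T → (A ⊆ compOf G T s) →
      ∀ v ∈ compOf G S s, v ∉ T := by
    intro T hT hAT u huC huT
    have hXT : ∀ x ∈ X, x ∈ compOf G T s := by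
      intro x hx
      rcases Set.mem_insert_iff.1 hx with rfl | hx
      · exact ⟨SimpleGraph.Walk.nil, by
          intro z hz
          simp only [SimpleGraph.Walk.support_nil, List.mem_singleton] at hz
          subst hz; exact hT.1.1⟩
      · exact hAT hx
    have hST : ∀ v ∈ S, v ∉ T → v ∈ compOf G T s := by
      intro v hvS hvT
      obtain ⟨hvX, x, hxX, hxv⟩ := hSN hvS
      exact compOf_adj (hXT x hxX) hxv hvT
    obtain ⟨w2, hw2a, hw2b⟩ := minsep_escape hT huT
    have hw2S : ∀ x ∈ w2.support, x ∉ S := by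
      intro x hx hxS
      by_cases hxu : x = u
      · subst hxu; exact not_mem_of_mem_compOf huC hxS
      · have hxT : x ∉ T := fun h => hxu (hw2a x hx h)
        exact hT.1.2.2 (reachAvoid_trans_s4 (hST x hxS hxT) (hw2b x hx hxu))
    obtain ⟨p, hp⟩ := huC
    exact hsepS.2.2 ⟨p.append w2, fun z hz =>
      ((SimpleGraph.Walk.mem_support_append_iff _ _).1 hz).elim (hp z) (hw2S z)⟩
  have compSub : ∀ T, IsMinSep G s t T → A ⊆ compOf G T s →
      compOf G S s ⊆ compOf G T s := by
    intro T hT hAT v hv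
    obtain ⟨w, hw⟩ := hv
    exact ⟨w, fun x hx => key T hT hAT x (support_mem_compOf w hw x hx) ⟩
  have eqOf : ∀ T, IsMinSep G s t T → A ⊆ compOf G T s →
      compOf G T s ⊆ compOf G S s → T = S := by
    intro T hT hAT hsub
    have hSsubT : S ⊆ T := by
      intro v hvS
      by_contra hvT
      obtain ⟨hvX, x, hxX, hxv⟩ := hSN hvS
      have hxT : x ∈ compOf G T s := by
        rcases Set.mem_insert_iff.1 hxX with rfl | hx
        · exact ⟨SimpleGraph.Walk.nil, by
            intro z hz
            simp only [SimpleGraph.Walk.support_nil, List.mem_singleton] at hz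
            subst hz; exact hT.1.1⟩
        · exact hAT hx
      exact not_mem_of_mem_compOf (hsub (compOf_adj hxT hxv hvT)) hvS
    by_contra hne
    exact hT.2 S (hSsubT.ssubset_of_ne (Ne.symm hne)) hsepS
  refine ⟨S, ⟨hmin, fun a ha => hXcomp a (Set.mem_insert_of_mem _ ha), ?_⟩, ?_⟩
  · intro T hT hTne hAT hsub
    exact hTne (eqOf T hT hAT hsub)
  · rintro S' ⟨hS'min, hS'A, hS'close⟩
    by_contra hne
    exact hS'close S hmin (fun h => hne h.symm)
      (fun a ha => hXcomp a (Set.mem_insert_of_mem _ ha))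
      (compSub S' hS'min hS'A)
end

section
/- Let G be a connected graph and A, B disjoint nonadjacent nonempty vertex sets. A set S ⊆ V(G)∖(A∪B) is a safe minimal A,B-separator if and only if for every pair of vertices s ∈ A and t ∈ B, S is a minimal s,t-separator of G with A ⊆ C_s(G−S) and B ⊆ C_t(G−S). -/
variable {V : Type*}

private lemma ra_refl {G : SimpleGraph V} {S : Set V} {u : V} (h : u ∉ S) :
    ReachAvoid G S u u :=
  ⟨SimpleGraph.Walk.nil, by simpa using h⟩

private lemma ra_symm {G : SimpleGraph V} {S : Set V} {u v : V}
    (h : ReachAvoid G S u v) : ReachAvoid G S v u := by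
  obtain ⟨w, hw⟩ := h
  exact ⟨w.reverse, fun x hx => hw x (by simpa using hx)⟩

private lemma ra_trans {G : SimpleGraph V} {S : Set V} {u v w : V}
    (h1 : ReachAvoid G S u v) (h2 : ReachAvoid G S v w) : ReachAvoid G S u w := by
  obtain ⟨p, hp⟩ := h1; obtain ⟨q, hq⟩ := h2
  refine ⟨p.append q, fun x hx => ?_⟩
  rcases (SimpleGraph.Walk.mem_support_append_iff _ _).mp hx with h | h
  · exact hp x h
  · exact hq x h

private lemma ra_mono {G : SimpleGraph V} {S S' : Set V} (hss : S' ⊆ S) {u v : V}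
    (h : ReachAvoid G S u v) : ReachAvoid G S' u v := by
  obtain ⟨w, hw⟩ := h
  exact ⟨w, fun x hx hx' => hw x hx (hss hx')⟩

theorem stmt6 (G : SimpleGraph V) (hconn : G.Connected)
    (A B : Set V) (hAB : Disjoint A B) (hAne : A.Nonempty) (hBne : B.Nonempty)
    (hnadj : ∀ a ∈ A, ∀ b ∈ B, ¬ G.Adj a b) (S : Set V) :
    (IsMinABSep G A B S ∧ IsSafeSep G A B S) ↔
      ∀ s ∈ A, ∀ t ∈ B, IsMinSep G s t S ∧
        A ⊆ compOf G S s ∧ B ⊆ compOf G S t := by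
  constructor
  · rintro ⟨⟨⟨hsub, hsep⟩, hmin⟩, -, a, b, haS, hbS, hAa, hBb, hdis⟩
    intro s hs t ht
    have hsS : s ∉ S := fun h => (hsub h) (Or.inl hs)
    have htS : t ∉ S := fun h => (hsub h) (Or.inr ht)
    have has : ReachAvoid G S a s := hAa hs
    have hbt : ReachAvoid G S b t := hBb ht
    have hAs : A ⊆ compOf G S s := fun a' ha' => ra_trans (ra_symm has) (hAa ha')
    have hBt : B ⊆ compOf G S t := fun b' hb' => ra_trans (ra_symm hbt) (hBb hb')
    have hnst : ¬ ReachAvoid G S s t := by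
      intro h
      have h1 : t ∈ compOf G S a := ra_trans has h
      exact Set.disjoint_left.mp hdis h1 (hBb ht)
    refine ⟨⟨⟨hsS, htS, hnst⟩, ?_⟩, hAs, hBt⟩
    rintro S' hS' ⟨hsS', htS', hnst'⟩
    have hsub' : S' ⊆ (A ∪ B)ᶜ := hS'.subset.trans hsub
    have hex : ∃ a' ∈ A, ∃ b' ∈ B, ReachAvoid G S' a' b' := by
      by_contra hc
      push_neg at hc
      exact hmin S' hS' ⟨hsub', hc⟩
    obtain ⟨a', ha', b', hb', hr⟩ := hex
    exact hnst' (ra_trans (ra_mono hS'.subset (hAs ha'))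
      (ra_trans hr (ra_symm (ra_mono hS'.subset (hBt hb')))))
  · intro h
    obtain ⟨s, hs⟩ := hAne
    obtain ⟨t, ht⟩ := hBne
    obtain ⟨⟨⟨hsS, htS, hnst⟩, hmin⟩, hAs, hBt⟩ := h s hs t ht
    have hsub : S ⊆ (A ∪ B)ᶜ := by
      intro x hx
      rintro (hxA | hxB)
      · exact ((h x hxA t ht).1.1.1) hx
      · exact ((h s hs x hxB).1.1.2.1) hx
    refine ⟨⟨⟨hsub, fun a ha b hb => (h a ha b hb).1.1.2.2⟩, ?_⟩,
      hsub, s, t, hsS, htS, hAs, hBt, ?_⟩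
    · rintro S' hS' ⟨hsub', hsep'⟩
      exact hmin S' hS' ⟨fun hx => hsS (hS'.subset hx),
        fun hx => htS (hS'.subset hx), hsep' s hs t ht⟩
    · rw [Set.disjoint_left]
      intro v hvs hvt
      exact hnst (ra_trans hvs (ra_symm hvt))
end

section
/- Let G be a connected graph, s,t nonadjacent vertices, and S a minimal s,t-separator with S ⊆ N_G(t). If a vertex u ∉ C_s(G−S), then for every minimal s,t-separator T of G, u ∉ C_s(G−T). -/
variable {V : Type*}

theorem stmt8 (G : SimpleGraph V) (hconn : G.Connected) (s t : V)
    (hst : s ≠ t) (hadj : ¬ G.Adj s t)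
    (S : Set V) (hS : IsMinSep G s t S) (hSN : S ⊆ G.neighborSet t)
    (u : V) (hu : u ∉ compOf G S s) :
    ∀ T : Set V, IsMinSep G s t T → u ∉ compOf G T s := by
  classical
  rintro T ⟨⟨hsT, htT, hsep⟩, -⟩ ⟨w, hw⟩
  -- the walk w must hit S
  obtain ⟨x, hxsupp, hxS⟩ : ∃ x ∈ w.support, x ∈ S := by
    by_contra h
    push_neg at h
    exact hu ⟨w, h⟩
  have hxt : G.Adj x t := (hSN hxS).symm
  refine hsep ⟨(w.takeUntil x hxsupp).concat hxt, ?_⟩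
  intro y hy
  rw [SimpleGraph.Walk.support_concat, List.mem_append] at hy
  rcases hy with hy | hy
  · exact hw y (SimpleGraph.Walk.support_takeUntil_subset w hxsupp hy)
  · rw [List.mem_singleton] at hy; subst hy; exact htT
end

section
/- Let G be a connected graph, s,t nonadjacent vertices, Q a minimal s,t-separator, M the graph obtained from G by contracting C_s(G−Q) to the vertex s, and D, A vertex sets with D = A ∖ C_s(G−Q). Assume that every minimal s,t-separator S of G with A ⊆ C_s(G−S) satisfies C_s(G−Q) ⊆ C_s(G−S). Then the minimal s,t-separators of M close to sD are exactly the minimal s,t-separators of G close to sA, i.e., F_{sD}(M) = F_{sA}(G). -/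
variable {V : Type*}

open Relation

/-- step relation -/
def auxStep (G : SimpleGraph V) (S : Set V) (a b : V) : Prop :=
  G.Adj a b ∧ a ∉ S ∧ b ∉ S

lemma auxStep_symm {G : SimpleGraph V} {S : Set V} {a b : V} (h : auxStep G S a b) :
    auxStep G S b a := ⟨h.1.symm, h.2.2, h.2.1⟩

lemma aux_rtg_symm {G : SimpleGraph V} {S : Set V} {a b : V}
    (h : ReflTransGen (auxStep G S) a b) : ReflTransGen (auxStep G S) b a := by
  induction h with
  | refl => exact .refl
  | tail _ hs ih => exact .head (auxStep_symm hs) ih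

lemma aux_walk_rtg {G : SimpleGraph V} {S : Set V} : ∀ {u v : V} (w : G.Walk u v),
    (∀ x ∈ w.support, x ∉ S) → ReflTransGen (auxStep G S) u v := by
  intro u v w
  induction w with
  | nil => intro _; exact .refl
  | @cons a b c h p ih =>
    intro hw
    refine .head ⟨h, hw a ?_, hw b ?_⟩ (ih fun x hx => hw x ?_)
    · simp
    · simp [SimpleGraph.Walk.support_cons, p.start_mem_support]
    · simp [SimpleGraph.Walk.support_cons, hx]

lemma aux_rtg_walk {G : SimpleGraph V} {S : Set V} {u v : V}
    (h : ReflTransGen (auxStep G S) u v) (hu : u ∉ S) : ReachAvoid G S u v := by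
  induction h with
  | refl => exact ⟨SimpleGraph.Walk.nil, by simpa using hu⟩
  | @tail b c _ hs ih =>
    obtain ⟨w, hw⟩ := ih
    refine ⟨w.concat hs.1, fun x hx => ?_⟩
    rw [SimpleGraph.Walk.support_concat] at hx
    rcases List.mem_append.mp hx with h1 | h2
    · exact hw x h1
    · simp at h2; subst h2; exact hs.2.2

lemma aux_reach_iff {G : SimpleGraph V} {S : Set V} {u v : V} :
    ReachAvoid G S u v ↔ u ∉ S ∧ v ∉ S ∧ ReflTransGen (auxStep G S) u v := by
  constructor
  · rintro ⟨w, hw⟩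
    exact ⟨hw u w.start_mem_support, hw v w.end_mem_support, aux_walk_rtg w hw⟩
  · rintro ⟨hu, _, h⟩
    exact aux_rtg_walk h hu

lemma aux_mem_comp_notS {G : SimpleGraph V} {S : Set V} {s x : V}
    (h : x ∈ compOf G S s) : x ∉ S := by
  obtain ⟨w, hw⟩ := h
  exact hw x w.end_mem_support

lemma aux_comp_startS {G : SimpleGraph V} {S : Set V} {s x : V}
    (h : x ∈ compOf G S s) : s ∉ S := by
  obtain ⟨w, hw⟩ := h
  exact hw s w.start_mem_support

/-- every vertex on a walk from s avoiding Q lies in compOf G Q s -/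
lemma aux_support_in_comp {G : SimpleGraph V} {Q : Set V} {s x : V}
    (w : G.Walk s x) (hw : ∀ y ∈ w.support, y ∉ Q) :
    ∀ y ∈ w.support, y ∈ compOf G Q s := by
  classical
  intro y hy
  exact ⟨w.takeUntil y hy, fun z hz => hw z (w.support_takeUntil_subset hy hz)⟩

/-- if S avoids C := compOf G Q s, then C ⊆ compOf G S s -/
lemma aux_C_subset {G : SimpleGraph V} {Q S : Set V} {s : V}
    (h : ∀ x ∈ compOf G Q s, x ∉ S) : compOf G Q s ⊆ compOf G S s := by
  rintro x ⟨w, hw⟩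
  exact ⟨w, fun y hy => h y (aux_support_in_comp w hw y hy)⟩

lemma aux_rtg_lift {α : Type*} {r r' : α → α → Prop} {f : α → α}
    (hf : ∀ a b, r a b → Relation.ReflTransGen r' (f a) (f b)) {u v : α}
    (h : Relation.ReflTransGen r u v) : Relation.ReflTransGen r' (f u) (f v) := by
  induction h with
  | refl => exact .refl
  | tail _ hs ih => exact ih.trans (hf _ _ hs)

section Transfer

variable {G : SimpleGraph V} {Q : Set V} {s : V}

/-- G-reachability transfers to M-reachability for endpoints outside C\{s} -/
lemma aux_GM {S : Set V} (hs : s ∉ S) {u v : V}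
    (hu : u ∉ compOf G Q s \ {s}) (hv : v ∉ compOf G Q s \ {s})
    (h : ReachAvoid G S u v) :
    ReachAvoid (contractGraph G s (compOf G Q s \ {s})) S u v := by
  classical
  set C := compOf G Q s \ {s} with hCdef
  set M := contractGraph G s C with hMdef
  set π : V → V := fun x => if x ∈ C then s else x with hπ
  rw [aux_reach_iff] at h ⊢
  obtain ⟨huS, hvS, hrtg⟩ := h
  refine ⟨huS, hvS, ?_⟩
  have hsC : s ∉ C := by simp [hCdef]
  have key : ∀ a b, auxStep G S a b → Relation.ReflTransGen (auxStep M S) (π a) (π b) := by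
    rintro b c ⟨hadj, hbS, hcS⟩
    by_cases hb : b ∈ C <;> by_cases hc : c ∈ C
    · rw [show π b = s from if_pos hb, show π c = s from if_pos hc]
    · rw [show π b = s from if_pos hb, show π c = c from if_neg hc]
      by_cases hcs : c = s
      · rw [hcs]
      · exact Relation.ReflTransGen.single
          ⟨⟨hsC, hc, Ne.symm hcs, Or.inr (Or.inl ⟨rfl, b, hb, hadj⟩)⟩, hs, hcS⟩
    · rw [show π b = b from if_neg hb, show π c = s from if_pos hc]
      by_cases hbs : b = s
      · rw [hbs]
      · exact Relation.ReflTransGen.single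
          ⟨⟨hb, hsC, hbs, Or.inr (Or.inr ⟨rfl, c, hc, hadj.symm⟩)⟩, hbS, hs⟩
    · rw [show π b = b from if_neg hb, show π c = c from if_neg hc]
      exact Relation.ReflTransGen.single ⟨⟨hb, hc, hadj.ne, Or.inl hadj⟩, hbS, hcS⟩
  have := aux_rtg_lift key hrtg
  have hπu : π u = u := by simp [hπ, hu]
  have hπv : π v = v := by simp [hπ, hv]
  rwa [hπu, hπv] at this

/-- M-reachability transfers back to G, given C ⊆ compOf G S s -/
lemma aux_MG {S : Set V} (hC : compOf G Q s ⊆ compOf G S s) {u v : V}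
    (h : ReachAvoid (contractGraph G s (compOf G Q s \ {s})) S u v) :
    ReachAvoid G S u v := by
  set C := compOf G Q s \ {s} with hCdef
  rw [aux_reach_iff] at h ⊢
  obtain ⟨huS, hvS, hrtg⟩ := h
  refine ⟨huS, hvS, ?_⟩
  have key : ∀ a b, auxStep (contractGraph G s C) S a b →
      Relation.ReflTransGen (auxStep G S) a b := by
    rintro b c ⟨⟨hb, hc, hne, hadj | ⟨hbs, x, hx, hxadj⟩ | ⟨hcs, x, hx, hxadj⟩⟩, hbS, hcS⟩
    · exact Relation.ReflTransGen.single ⟨hadj, hbS, hcS⟩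
    · -- b = s, x ∈ C, G.Adj x c : s reaches x in G−S, then step x→c
      rw [hbs]
      have hxcomp : x ∈ compOf G S s := hC hx.1
      have hrx : Relation.ReflTransGen (auxStep G S) s x :=
        (aux_reach_iff.mp hxcomp).2.2
      exact hrx.tail ⟨hxadj, aux_mem_comp_notS hxcomp, hcS⟩
    · -- c = s, x ∈ C, G.Adj x b
      rw [hcs]
      have hxcomp : x ∈ compOf G S s := hC hx.1
      have hrx : Relation.ReflTransGen (auxStep G S) s x :=
        (aux_reach_iff.mp hxcomp).2.2
      exact aux_rtg_symm (hrx.tail ⟨hxadj, aux_mem_comp_notS hxcomp, hbS⟩)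
  have := aux_rtg_lift (f := id) key hrtg
  simpa using this

end Transfer

section Corr

variable {G : SimpleGraph V} {Q : Set V} {s t : V}

/-- vertices of C\{s} are isolated in M, hence not reachable from s unless equal to s -/
lemma aux_isolated {S : Set V} {x : V} (hx : x ∈ compOf G Q s \ {s}) :
    ¬ ReachAvoid (contractGraph G s (compOf G Q s \ {s})) S s x := by
  intro h
  rw [aux_reach_iff] at h
  rcases Relation.ReflTransGen.cases_tail h.2.2 with heq | ⟨b, _, hstep⟩
  · exact hx.2 heq
  · exact hstep.1.2.1 hx

/-- if S is a minimal s,t-separator of M then S avoids C -/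
lemma aux_minsep_avoids (hQ : IsMinSep G s t Q)
    {S : Set V} (hS : IsMinSep (contractGraph G s (compOf G Q s \ {s})) s t S) :
    ∀ x ∈ compOf G Q s, x ∉ S := by
  classical
  set C := compOf G Q s \ {s} with hCdef
  set M := contractGraph G s C with hMdef
  intro x hxC hxS
  have hxs : x ≠ s := fun h => hS.1.1 (h ▸ hxS)
  have hxC' : x ∈ C := ⟨hxC, hxs⟩
  -- S \ {x} is a separator of M
  have hsep : IsSep M s t (S \ {x}) := by
    refine ⟨fun h => hS.1.1 h.1, fun h => hS.1.2.1 h.1, ?_⟩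
    rintro ⟨w, hw⟩
    -- x not on w
    have hxw : x ∉ w.support := by
      intro hmem
      exact aux_isolated hxC'
        ⟨w.takeUntil x hmem, fun z hz => hw z (w.support_takeUntil_subset hmem hz)⟩
    exact hS.1.2.2 ⟨w, fun z hz hzS => by
      rcases eq_or_ne z x with rfl | hzx
      · exact hxw hz
      · exact hw z hz ⟨hzS, hzx⟩⟩
  exact hS.2 (S \ {x}) (Set.sdiff_singleton_ssubset.mpr hxS) hsep

lemma aux_s_mem_C (hQ : IsMinSep G s t Q) : s ∈ compOf G Q s :=
  ⟨SimpleGraph.Walk.nil, by simpa using hQ.1.1⟩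

lemma aux_t_notmem_C (hQ : IsMinSep G s t Q) : t ∉ compOf G Q s :=
  fun h => hQ.1.2.2 h

lemma aux_s_not_Cd : s ∉ compOf G Q s \ {s} := fun h => h.2 rfl

lemma aux_t_not_Cd (hQ : IsMinSep G s t Q) : t ∉ compOf G Q s \ {s} :=
  fun h => aux_t_notmem_C hQ h.1

/-- S minsep of G with C ⊆ comp ⇒ S minsep of M -/
lemma aux_minsep_of (hQ : IsMinSep G s t Q) {S : Set V}
    (hS : IsMinSep G s t S) (hC : compOf G Q s ⊆ compOf G S s) :
    IsMinSep (contractGraph G s (compOf G Q s \ {s})) s t S := by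
  constructor
  · exact ⟨hS.1.1, hS.1.2.1, fun h => hS.1.2.2 (aux_MG hC h)⟩
  · intro S' hsub hsep'
    refine hS.2 S' hsub ⟨hsep'.1, hsep'.2.1, fun h => hsep'.2.2 ?_⟩
    exact aux_GM hsep'.1 aux_s_not_Cd (aux_t_not_Cd hQ) h

/-- S minsep of M ⇒ S minsep of G and C ⊆ comp -/
lemma aux_minsep_to (hQ : IsMinSep G s t Q) {S : Set V}
    (hS : IsMinSep (contractGraph G s (compOf G Q s \ {s})) s t S) :
    IsMinSep G s t S ∧ compOf G Q s ⊆ compOf G S s := by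
  have havoid := aux_minsep_avoids hQ hS
  have hC : compOf G Q s ⊆ compOf G S s := aux_C_subset havoid
  refine ⟨⟨⟨hS.1.1, hS.1.2.1, fun h => hS.1.2.2 ?_⟩, ?_⟩, hC⟩
  · exact aux_GM hS.1.1 aux_s_not_Cd (aux_t_not_Cd hQ) h
  · intro S' hsub hsep'
    have hC' : compOf G Q s ⊆ compOf G S' s :=
      aux_C_subset fun x hx hxS' => havoid x hx (hsub.1 hxS')
    exact hS.2 S' hsub ⟨hsep'.1, hsep'.2.1, fun h => hsep'.2.2 (aux_MG hC' h)⟩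

/-- component identity -/
lemma aux_comp_eq (hQ : IsMinSep G s t Q) {S : Set V}
    (hC : compOf G Q s ⊆ compOf G S s) :
    compOf (contractGraph G s (compOf G Q s \ {s})) S s
      = compOf G S s \ (compOf G Q s \ {s}) := by
  have hsS : s ∉ S := aux_mem_comp_notS (hC (aux_s_mem_C hQ))
  ext x
  constructor
  · intro hx
    refine ⟨aux_MG hC hx, fun hxC => aux_isolated hxC hx⟩
  · rintro ⟨hx, hxC⟩
    exact aux_GM hsS aux_s_not_Cd hxC hx

end Corr

theorem stmt19 (G : SimpleGraph V) (hconn : G.Connected) (s t : V)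
    (hst : s ≠ t) (hadj : ¬ G.Adj s t)
    (Q : Set V) (hQ : IsMinSep G s t Q)
    (A D : Set V) (hD : D = A \ compOf G Q s)
    (hyp : ∀ S : Set V, IsMinSep G s t S → A ⊆ compOf G S s →
      compOf G Q s ⊆ compOf G S s) :
    {S : Set V | CloseTo (contractGraph G s (compOf G Q s \ {s})) s t D S} =
      {S : Set V | CloseTo G s t A S} := by
  subst hD
  set C := compOf G Q s with hCs
  set M := contractGraph G s (C \ {s}) with hMs
  ext S
  simp only [Set.mem_setOf_eq]
  constructor
  · rintro ⟨hminM, hDsub, hclose⟩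
    obtain ⟨hminG, hCS⟩ := aux_minsep_to hQ hminM
    have hcompS := aux_comp_eq hQ hCS
    have hAsub : A ⊆ compOf G S s := by
      intro x hx
      by_cases hxC : x ∈ C
      · exact hCS hxC
      · exact (hcompS ▸ hDsub ⟨hx, hxC⟩).1
    refine ⟨hminG, hAsub, ?_⟩
    intro T hT hne hAT hsub
    have hCT : C ⊆ compOf G T s := hyp T hT hAT
    have hTM := aux_minsep_of hQ hT hCT
    have hcompT := aux_comp_eq hQ hCT
    have hDT : A \ C ⊆ compOf M T s := by
      rw [hcompT]
      rintro x ⟨hxA, hxC⟩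
      exact ⟨hAT hxA, fun h => hxC h.1⟩
    refine hclose T hTM hne hDT ?_
    rw [hcompT, hcompS]
    exact Set.diff_subset_diff_left hsub
  · rintro ⟨hminG, hAsub, hclose⟩
    have hCS : C ⊆ compOf G S s := hyp S hminG hAsub
    have hminM := aux_minsep_of hQ hminG hCS
    have hcompS := aux_comp_eq hQ hCS
    have hDsub : A \ C ⊆ compOf M S s := by
      rw [hcompS]
      rintro x ⟨hxA, hxC⟩
      exact ⟨hAsub hxA, fun h => hxC h.1⟩
    refine ⟨hminM, hDsub, ?_⟩
    intro T hTM hne hDT hsub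
    obtain ⟨hTG, hCT⟩ := aux_minsep_to hQ hTM
    have hcompT := aux_comp_eq hQ hCT
    have hAT : A ⊆ compOf G T s := by
      intro x hx
      by_cases hxC : x ∈ C
      · exact hCT hxC
      · exact (hcompT ▸ hDT ⟨hx, hxC⟩).1
    refine hclose T hTG hne hAT ?_
    intro x hx
    by_cases hxC : x ∈ C \ {s}
    · exact hCS hxC.1
    · have hxM : x ∈ compOf M T s := hcompT ▸ ⟨hx, hxC⟩
      exact (hcompS ▸ hsub hxM).1
end
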